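/- For the solution ξ(ζ) = 2·arctan(e^ζ/√B), η(ζ) = ζ − ln(e^{2ζ} + B) with B > 0, the squared non-dimensional speed (ξ′)² + (η′)² equals 1 for all ζ. -/

import Mathlib

open Real

/-- The explicit solution has unit non-dimensional speed: `(ξ′)² + (η′)² = 1`. -/
theorem explicit_solution_unit_speed
    (B : ℝ) (hB : 0 < B)
    (ξ η : ℝ → ℝ)
    (hξ : ∀ ζ, ξ ζ = 2 * Real.arctan (Real.exp ζ / Real.sqrt B))
    (hη : ∀ ζ, η ζ = ζ - Real.log (Real.exp (2 * ζ) + B)) :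
    ∀ ζ, (deriv ξ ζ) ^ 2 + (deriv η ζ) ^ 2 = 1 := by
  intro ζ
  have hsB : Real.sqrt B > 0 := Real.sqrt_pos.mpr hB
  have hden : Real.exp (2 * ζ) + B > 0 := by positivity
  have hξf : ξ = fun ζ => 2 * Real.arctan (Real.exp ζ / Real.sqrt B) := funext hξ
  have hηf : η = fun ζ => ζ - Real.log (Real.exp (2 * ζ) + B) := funext hη
  have h1 : HasDerivAt ξ
      (2 * (1 / (1 + (Real.exp ζ / Real.sqrt B) ^ 2) * (Real.exp ζ / Real.sqrt B))) ζ := by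
    rw [hξf]
    exact (((Real.hasDerivAt_exp ζ).div_const (Real.sqrt B)).arctan).const_mul 2
  have h2 : HasDerivAt η (1 - (Real.exp (2 * ζ) * 2) / (Real.exp (2 * ζ) + B)) ζ := by
    rw [hηf]
    have he : HasDerivAt (fun ζ : ℝ => Real.exp (2 * ζ) + B) (Real.exp (2 * ζ) * 2) ζ := by
      have := ((hasDerivAt_id ζ).const_mul 2).exp
      simpa using this.add_const B
    exact (hasDerivAt_id ζ).sub (he.log (ne_of_gt hden))
  rw [h1.deriv, h2.deriv]
  have hsq : Real.sqrt B ^ 2 = B := Real.sq_sqrt hB.le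
  have he2 : Real.exp (2 * ζ) = Real.exp ζ ^ 2 := by
    rw [← Real.exp_nat_mul]; norm_num [mul_comm]
  rw [he2] at hden ⊢
  rw [← hsq] at hden ⊢
  have h1' : (1:ℝ) + (Real.exp ζ / Real.sqrt B) ^ 2 ≠ 0 := by positivity
  field_simp
  simp only [Real.sqrt_sq hsB.le]
  linear_combination (0:ℝ) * hsq
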